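/- Fix nonnegative integers ν and k and a positive integer n. Let M be the (k+1)×(k+1) rational matrix with entries M_{i,j} = C(i,j)·(i+ν)!·ν!/((i−j+ν)!·(j+ν)!) for 0 ≤ j ≤ i ≤ k and M_{i,j} = 0 for j > i. Then W_{n+1}(ν; 2k) equals the k-th row sum of M^n, i.e., W_{n+1}(ν;2k) = Σ_{j=0}^{k} (M^n)_{k,j}. -/

import Mathlib

/-- `A ν k j` is the rational number `A_{k,j}(ν) = C(k,j)·(k+ν)!·ν! / ((k−j+ν)!·(j+ν)!)`. -/
def A (ν k j : ℕ) : ℚ :=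
  (Nat.choose k j : ℚ) * ((k + ν).factorial : ℚ) * (ν.factorial : ℚ) /
    (((k - j + ν).factorial : ℚ) * ((j + ν).factorial : ℚ))

/-- `W m ν k` is the `2k`-th moment `W_m(ν; 2k)`, given as a sum over all `m`-tuples of
nonnegative integers summing to `k`. -/
def W (m ν k : ℕ) : ℚ :=
  ∑ f ∈ Finset.Nat.antidiagonalTuple m k,
    ((k.factorial : ℚ) * ((k + ν).factorial : ℚ) * ((ν.factorial : ℚ)) ^ (m - 1)) /
      ((∏ i, ((f i).factorial : ℚ)) * ∏ i, ((f i + ν).factorial : ℚ))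

/-- The `(k+1)×(k+1)` lower-triangular matrix with entries `A_{i,j}(ν)`. -/
def M (ν k : ℕ) : Matrix (Fin (k + 1)) (Fin (k + 1)) ℚ :=
  fun i j => if (j : ℕ) ≤ (i : ℕ) then A ν (i : ℕ) (j : ℕ) else 0

lemma fact_ne (n : ℕ) : ((n.factorial : ℚ)) ≠ 0 := by
  exact_mod_cast n.factorial_ne_zero

lemma W_one (ν j : ℕ) : W 1 ν j = 1 := by
  rw [W, Finset.Nat.antidiagonalTuple_one, Finset.sum_singleton]
  simp [div_eq_one_iff_eq, mul_ne_zero (fact_ne j) (fact_ne (j + ν))]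

/-- Splitting off the first coordinate of an antidiagonal tuple. -/
lemma sum_antidiagonalTuple_succ {m K : ℕ} (F : (Fin (m + 1) → ℕ) → ℚ) :
    ∑ x ∈ Finset.Nat.antidiagonalTuple (m + 1) K, F x
      = ∑ p ∈ Finset.HasAntidiagonal.antidiagonal K,
          ∑ g ∈ Finset.Nat.antidiagonalTuple m p.2, F (Fin.cons p.1 g) := by
  rw [Finset.sum_sigma' (Finset.HasAntidiagonal.antidiagonal K)
    (fun p => Finset.Nat.antidiagonalTuple m p.2) (fun p g => F (Fin.cons p.1 g))]
  refine Finset.sum_nbij'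
    (fun (x : Fin (m + 1) → ℕ) =>
      (⟨(x 0, ∑ i : Fin m, x i.succ), Fin.tail x⟩ : (_ : ℕ × ℕ) × (Fin m → ℕ)))
    (fun (y : (_ : ℕ × ℕ) × (Fin m → ℕ)) => Fin.cons y.1.1 y.2) ?_ ?_ ?_ ?_ ?_
  · intro x hx
    rw [Finset.Nat.mem_antidiagonalTuple, Fin.sum_univ_succ] at hx
    refine Finset.mem_sigma.2 ⟨Finset.HasAntidiagonal.mem_antidiagonal.2 hx, ?_⟩
    rw [Finset.Nat.mem_antidiagonalTuple]
    rfl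
  · rintro ⟨⟨a, b⟩, g⟩ hy
    rw [Finset.mem_sigma] at hy
    have h2 := Finset.Nat.mem_antidiagonalTuple.1 hy.2
    have h1 := Finset.HasAntidiagonal.mem_antidiagonal.1 hy.1
    rw [Finset.Nat.mem_antidiagonalTuple, Fin.sum_univ_succ]
    simp only [Fin.cons_zero, Fin.cons_succ]
    simp only at h1 h2
    rw [h2, h1]
  · intro x _; exact Fin.cons_self_tail x
  · rintro ⟨⟨a, b⟩, g⟩ hy
    rw [Finset.mem_sigma] at hy
    have h2 := Finset.Nat.mem_antidiagonalTuple.1 hy.2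
    simp only at h2
    simp only [Fin.cons_zero, Fin.cons_succ, Fin.tail_cons]
    rw [show (∑ i : Fin m, g i) = b from h2]
  · intro x _; rw [Fin.cons_self_tail]

lemma A_symm (ν K j : ℕ) (h : j ≤ K) : A ν K (K - j) = A ν K j := by
  rw [A, A, Nat.choose_symm h, Nat.sub_sub_self h, mul_comm ((j + ν).factorial : ℚ)]

lemma W_succ (m ν K : ℕ) (hm : 1 ≤ m) :
    W (m + 1) ν K = ∑ j ∈ Finset.range (K + 1), A ν K j * W m ν j := by
  have key : W (m + 1) ν K = ∑ p ∈ Finset.HasAntidiagonal.antidiagonal K, A ν K p.1 * W m ν p.2 := by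
    rw [W]
    simp only [Nat.add_sub_cancel]
    rw [sum_antidiagonalTuple_succ]
    refine Finset.sum_congr rfl fun p hp => ?_
    have hpK := Finset.HasAntidiagonal.mem_antidiagonal.1 hp
    rw [W, Finset.mul_sum]
    refine Finset.sum_congr rfl fun g hg => ?_
    rw [Fin.prod_univ_succ, Fin.prod_univ_succ]
    simp only [Fin.cons_zero, Fin.cons_succ]
    have hch : (Nat.choose K p.1 : ℚ) * (p.1.factorial : ℚ) * (p.2.factorial : ℚ)
        = (K.factorial : ℚ) := by
      have := Nat.choose_mul_factorial_mul_factorial (n := K) (k := p.1)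
        (le_of_add_le_left hpK.le)
      have h2 : K - p.1 = p.2 := by omega
      rw [h2] at this
      exact_mod_cast this
    have hpow : ((ν.factorial : ℚ)) ^ m = ((ν.factorial : ℚ)) ^ (m - 1) * (ν.factorial : ℚ) := by
      conv_lhs => rw [show m = (m - 1) + 1 by omega]
      ring
    have hKp : K - p.1 = p.2 := by omega
    rw [A, hKp, hpow]
    rw [div_mul_div_comm, div_eq_div_iff]
    · rw [← hch]; ring
    · positivity
    · have := fact_ne p.1
      have := fact_ne (p.1 + ν)
      have h1 : (∏ x : Fin m, ((g x).factorial : ℚ)) ≠ 0 :=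
        Finset.prod_ne_zero_iff.2 fun i _ => fact_ne (g i)
      have h2 : (∏ x : Fin m, ((g x + ν).factorial : ℚ)) ≠ 0 :=
        Finset.prod_ne_zero_iff.2 fun i _ => fact_ne (g i + ν)
      positivity
  rw [key, Finset.Nat.sum_antidiagonal_eq_sum_range_succ_mk]
  rw [← Finset.sum_range_reflect]
  refine Finset.sum_congr rfl fun j hj => ?_
  have hjK : j ≤ K := by
    have := Finset.mem_range.1 hj; omega
  have h1 : K + 1 - 1 - j = K - j := by omega
  rw [h1, A_symm ν K j hjK, Nat.sub_sub_self hjK]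

lemma sum_fin_ite (k : ℕ) (i : Fin (k + 1)) (c : ℕ → ℚ) :
    (∑ j : Fin (k + 1), if (j : ℕ) ≤ (i : ℕ) then c (j : ℕ) else 0)
      = ∑ j ∈ Finset.range ((i : ℕ) + 1), c j := by
  rw [Fin.sum_univ_eq_sum_range (fun j => if j ≤ (i : ℕ) then c j else 0) (k + 1)]
  rw [← Finset.sum_subset (Finset.range_subset_range.2 (by omega : (i : ℕ) + 1 ≤ k + 1))
    (fun x _ hx => if_neg (by simp at hx ⊢; omega))]
  exact Finset.sum_congr rfl fun j hj => if_pos (by simp at hj; omega)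

/-- `W_{n+1}(ν;2k)` is the `k`-th row sum of the `n`-th power of the matrix `M(ν,k)`. -/
theorem stmt18 (ν k : ℕ) (n : ℕ) (hn : 0 < n) :
    W (n + 1) ν k = ∑ j : Fin (k + 1), ((M ν k) ^ n) (Fin.last k) j := by
  have main : ∀ n, 0 < n → ∀ i : Fin (k + 1),
      W (n + 1) ν (i : ℕ) = ∑ j : Fin (k + 1), ((M ν k) ^ n) i j := by
    intro n hn
    induction n with
    | zero => omega
    | succ n ih =>
      intro i
      rcases Nat.eq_zero_or_pos n with h0 | hpos
      · subst h0
        rw [pow_one, W_succ 1 ν (i : ℕ) le_rfl]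
        have : ∀ j : Fin (k + 1), M ν k i j
            = if (j : ℕ) ≤ (i : ℕ) then A ν (i : ℕ) (j : ℕ) * W 1 ν (j : ℕ) else 0 := by
          intro j
          rw [M, W_one]
          by_cases h : (j : ℕ) ≤ (i : ℕ) <;> simp [h]
        rw [Finset.sum_congr rfl (fun j _ => this j),
          sum_fin_ite k i (fun j => A ν (i : ℕ) j * W 1 ν j)]
      · rw [pow_succ', W_succ (n + 1) ν (i : ℕ) (by omega)]
        have hrow : ∀ j : Fin (k + 1), ((M ν k) * ((M ν k) ^ n)) i j
            = ∑ l : Fin (k + 1), M ν k i l * ((M ν k) ^ n) l j := by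
          intro j; rw [Matrix.mul_apply]
        rw [Finset.sum_congr rfl (fun j _ => hrow j), Finset.sum_comm]
        have : ∀ l : Fin (k + 1), ∑ j : Fin (k + 1), M ν k i l * ((M ν k) ^ n) l j
            = if (l : ℕ) ≤ (i : ℕ) then A ν (i : ℕ) (l : ℕ) * W (n + 1) ν (l : ℕ) else 0 := by
          intro l
          rw [← Finset.mul_sum, ← ih hpos l, M]
          by_cases h : (l : ℕ) ≤ (i : ℕ) <;> simp [h]
        rw [Finset.sum_congr rfl (fun l _ => this l),
          sum_fin_ite k i (fun l => A ν (i : ℕ) l * W (n + 1) ν l)]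
  have := main n hn (Fin.last k)
  simpa using this
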